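/- Let c > 0, β > 1, m = 0, and define γ = 1/(β−1), σ = (β−1)/c². Then the functions u(z) = (1 + σe^{−cz})^{−γ} and w(z) = e^{−cz} u(z)^β satisfy the travelling wave ODE system c u' = w and w'' + c w' − β (w u'/u)' = 0 on ℝ. -/

import Mathlib

lemma expAux (c : ℝ) (z : ℝ) : HasDerivAt (fun y : ℝ => Real.exp (-c*y)) (-c * Real.exp (-c*z)) z := by
  have h1 : HasDerivAt (fun y : ℝ => -c * y) (-c) z := by
    simpa using (hasDerivAt_id z).const_mul (-c)
  simpa [mul_comm] using h1.exp

lemma Faux (c σ : ℝ) (hσ : 0 < σ) (n : ℕ) (p : ℝ) (z : ℝ) :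
    HasDerivAt (fun y : ℝ => Real.exp (-c*y) ^ n * (1 + σ * Real.exp (-c*y)) ^ p)
      (-(c*(n:ℝ)) * (Real.exp (-c*z) ^ n * (1 + σ*Real.exp (-c*z)) ^ p)
        - c*σ*p * (Real.exp (-c*z) ^ (n+1) * (1 + σ*Real.exp (-c*z)) ^ (p-1))) z := by
  have hv : 0 < 1 + σ * Real.exp (-c*z) := by positivity
  have h1 : HasDerivAt (fun y : ℝ => Real.exp (-c*y) ^ n)
      ((n:ℝ) * Real.exp (-c*z) ^ (n-1) * (-c * Real.exp (-c*z))) z := (expAux c z).pow n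
  have h2 : HasDerivAt (fun y : ℝ => (1 + σ * Real.exp (-c*y)) ^ p)
      (σ * (-c * Real.exp (-c*z)) * p * (1 + σ * Real.exp (-c*z)) ^ (p-1)) z := by
    have hV : HasDerivAt (fun y : ℝ => 1 + σ * Real.exp (-c*y)) (σ * (-c * Real.exp (-c*z))) z :=
      ((expAux c z).const_mul σ).const_add 1
    exact hV.rpow_const (Or.inl hv.ne')
  have h : HasDerivAt (fun y : ℝ => Real.exp (-c*y) ^ n * (1 + σ * Real.exp (-c*y)) ^ p)
      ((n:ℝ) * Real.exp (-c*z) ^ (n-1) * (-c * Real.exp (-c*z)) * (1 + σ * Real.exp (-c*z)) ^ p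
        + Real.exp (-c*z) ^ n * (σ * (-c * Real.exp (-c*z)) * p * (1 + σ * Real.exp (-c*z)) ^ (p-1))) z :=
    h1.mul h2
  convert h using 1
  cases n with
  | zero => simp; ring
  | succ m => push_cast; rw [pow_succ, pow_succ]; simp; ring

/-- For `c > 0`, `β > 1`, `m = 0`, `γ = 1/(β-1)`, `σ = (β-1)/c²`, the profiles
`u(z) = (1 + σ e^{-cz})^{-γ}`, `w(z) = e^{-cz} u(z)^β` satisfy the travelling
wave ODE system `c u' = w` and `w'' + c w' - β (w u'/u)' = 0` on `ℝ`. -/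
theorem stmt_2 (c β γ σ : ℝ) (hc : 0 < c) (hβ : 1 < β)
    (hγ : γ = 1 / (β - 1)) (hσ : σ = (β - 1) / c ^ 2)
    (u w : ℝ → ℝ)
    (hu : ∀ z, u z = (1 + σ * Real.exp (-c * z)) ^ (-γ))
    (hw : ∀ z, w z = Real.exp (-c * z) * (u z) ^ β) :
    (∀ z : ℝ, c * deriv u z = w z) ∧
    (∀ z : ℝ, deriv (deriv w) z + c * deriv w z
        - β * deriv (fun y => w y * deriv u y / u y) z = 0) := by
  have hb1 : (0:ℝ) < β - 1 := by linarith
  have hσ0 : 0 < σ := by rw [hσ]; positivity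
  have hcn : c ≠ 0 := hc.ne'
  have k1 : c^2*σ = β - 1 := by rw [hσ]; field_simp
  have k2 : γ * (β - 1) = 1 := by rw [hγ]; field_simp
  have hvpos : ∀ z : ℝ, 0 < 1 + σ * Real.exp (-c*z) := fun z => by positivity
  -- u as F 0 (-γ)
  have huF : u = fun z : ℝ => Real.exp (-c*z) ^ (0:ℕ) * (1 + σ * Real.exp (-c*z)) ^ (-γ) := by
    funext z; rw [hu z]; simp
  -- derivative of u
  have hud : ∀ z : ℝ, HasDerivAt u
      (-(c*((0:ℕ):ℝ)) * (Real.exp (-c*z) ^ (0:ℕ) * (1 + σ*Real.exp (-c*z)) ^ (-γ))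
        - c*σ*(-γ) * (Real.exp (-c*z) ^ (0+1) * (1 + σ*Real.exp (-c*z)) ^ (-γ-1))) z := by
    rw [huF]; intro z; exact Faux c σ hσ0 0 (-γ) z
  have hderivu : deriv u = fun z : ℝ =>
      (-(c*((0:ℕ):ℝ)) * (Real.exp (-c*z) ^ (0:ℕ) * (1 + σ*Real.exp (-c*z)) ^ (-γ))
        - c*σ*(-γ) * (Real.exp (-c*z) ^ (0+1) * (1 + σ*Real.exp (-c*z)) ^ (-γ-1))) :=
    funext fun z => (hud z).deriv
  -- exponent fact
  have hexp : (-γ) * β = -γ - 1 := by linear_combination -k2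
  -- w as F 1 (-γ-1)
  have hwF : w = fun z : ℝ => Real.exp (-c*z) ^ (1:ℕ) * (1 + σ * Real.exp (-c*z)) ^ (-γ-1) := by
    funext z
    rw [hw z, hu z, ← Real.rpow_natCast _ 1]
    rw [← Real.rpow_mul (hvpos z).le, hexp]
    norm_num
  constructor
  · intro z
    rw [hderivu, hwF]
    simp only []
    push_cast
    linear_combination (Real.exp (-c*z) * (1 + σ*Real.exp (-c*z)) ^ (-γ-1)) * (γ*k1 + k2)
  · -- second derivative of w
    have hwd : ∀ z : ℝ, HasDerivAt w
        (-(c*((1:ℕ):ℝ)) * (Real.exp (-c*z) ^ (1:ℕ) * (1 + σ*Real.exp (-c*z)) ^ (-γ-1))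
          - c*σ*(-γ-1) * (Real.exp (-c*z) ^ (1+1) * (1 + σ*Real.exp (-c*z)) ^ (-γ-1-1))) z := by
      rw [hwF]; intro z; exact Faux c σ hσ0 1 (-γ-1) z
    have hdw : deriv w = fun z : ℝ =>
        (-(c*((1:ℕ):ℝ)) * (Real.exp (-c*z) ^ (1:ℕ) * (1 + σ*Real.exp (-c*z)) ^ (-γ-1))
          - c*σ*(-γ-1) * (Real.exp (-c*z) ^ (1+1) * (1 + σ*Real.exp (-c*z)) ^ (-γ-1-1))) :=
      funext fun z => (hwd z).deriv
    have hw2 : ∀ z : ℝ, HasDerivAt (deriv w)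
        ((-(c*((1:ℕ):ℝ))) * (-(c*((1:ℕ):ℝ)) * (Real.exp (-c*z) ^ (1:ℕ) * (1 + σ*Real.exp (-c*z)) ^ (-γ-1))
            - c*σ*(-γ-1) * (Real.exp (-c*z) ^ (1+1) * (1 + σ*Real.exp (-c*z)) ^ (-γ-1-1)))
          - (c*σ*(-γ-1)) * (-(c*(((1+1:ℕ)):ℝ)) * (Real.exp (-c*z) ^ (1+1:ℕ) * (1 + σ*Real.exp (-c*z)) ^ (-γ-1-1))
            - c*σ*(-γ-1-1) * (Real.exp (-c*z) ^ (1+1+1) * (1 + σ*Real.exp (-c*z)) ^ (-γ-1-1-1)))) z := by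
      rw [hdw]; intro z
      exact ((Faux c σ hσ0 1 (-γ-1) z).const_mul (-(c*((1:ℕ):ℝ)))).sub
        ((Faux c σ hσ0 (1+1) (-γ-1-1) z).const_mul (c*σ*(-γ-1)))
    -- g rewrite
    have hg : (fun y => w y * deriv u y / u y) = fun z : ℝ =>
        (c*σ*γ) * (Real.exp (-c*z) ^ (2:ℕ) * (1 + σ * Real.exp (-c*z)) ^ (-γ-2)) := by
      funext z
      rw [hwF, hderivu, hu z]
      simp only []
      have hv := hvpos z
      have hun : (1 + σ * Real.exp (-c*z)) ^ (-γ) ≠ 0 := (Real.rpow_pos_of_pos hv _).ne'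
      rw [div_eq_iff hun]
      have e1 : (1 + σ * Real.exp (-c*z)) ^ (-γ-1) * (1 + σ * Real.exp (-c*z)) ^ (-γ-1)
          = (1 + σ * Real.exp (-c*z)) ^ (-γ-2) * (1 + σ * Real.exp (-c*z)) ^ (-γ) := by
        rw [← Real.rpow_add hv, ← Real.rpow_add hv]; ring_nf
      push_cast
      linear_combination (c*σ*γ*Real.exp (-c*z)^2) * e1
    have hgd : ∀ z : ℝ, HasDerivAt (fun y => w y * deriv u y / u y)
        ((c*σ*γ) * (-(c*((2:ℕ):ℝ)) * (Real.exp (-c*z) ^ (2:ℕ) * (1 + σ*Real.exp (-c*z)) ^ (-γ-2))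
          - c*σ*(-γ-2) * (Real.exp (-c*z) ^ (2+1) * (1 + σ*Real.exp (-c*z)) ^ (-γ-2-1)))) z := by
      rw [hg]; intro z
      exact (Faux c σ hσ0 2 (-γ-2) z).const_mul (c*σ*γ)
    intro z
    rw [(hw2 z).deriv, (hgd z).deriv, hdw]
    simp only []
    rw [show (-γ-1-1 : ℝ) = -γ-2 by ring]
    push_cast
    linear_combination (2*c^2*σ*(Real.exp (-c*z)^2 * (1 + σ*Real.exp (-c*z)) ^ (-γ-2))
      - c^2*σ^2*(γ+2)*(Real.exp (-c*z)^3 * (1 + σ*Real.exp (-c*z)) ^ (-γ-2-1))) * k2
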